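/- Let α > 0 and β, λ > 0, and let X be a non-negative absolutely continuous random variable with cumulative distribution function F, differentiable on (0, +∞) with derivative f, satisfying 0 < F(x) < 1 for all x > 0 and lim_{x→0⁺} F(x) = 0. If the α-generalized reversed aging intensity function of X equals L̆_α(x) = (αβλ/x^β) · exp(−λα/x^β)/(1 − exp(−λα/x^β)) for every x ∈ (0, +∞), then X follows an inverse two-parameter Weibull distribution, i.e., F(x) = exp(−λ/x^β) for all x ∈ (0, +∞). -/

import Mathlib

/-- The α-generalized reversed aging intensity function. -/
noncomputable def genRAI (F f : ℝ → ℝ) (α x : ℝ) : ℝ :=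
  if α = 0 then -(x * f x) / (F x * Real.log (F x))
  else α * x * F x ^ (α - 1) * f x / (1 - F x ^ α)

/-- For `α > 0` and `β, λ > 0`: if the α-generalized reversed aging intensity of `X`
is `L̆_α(x) = (αβλ/x^β) · exp(-λα/x^β)/(1 - exp(-λα/x^β))` on `(0,∞)`, then `X`
follows an inverse two-parameter Weibull distribution: `F(x) = exp(-λ/x^β)` for all
`x > 0`. -/
theorem stmt_11 (α β lam : ℝ) (hα : 0 < α) (hβ : 0 < β) (hlam : 0 < lam)
    (F f : ℝ → ℝ)
    (hmono : Monotone F)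
    (hd : ∀ x ∈ Set.Ioi (0:ℝ), HasDerivAt F (f x) x)
    (hF : ∀ x ∈ Set.Ioi (0:ℝ), 0 < F x ∧ F x < 1)
    (hfi : ∀ u v : ℝ, 0 < u → 0 < v → IntervalIntegrable f MeasureTheory.volume u v)
    (hF0 : Filter.Tendsto F (nhdsWithin (0:ℝ) (Set.Ioi 0)) (nhds 0))
    (hL : ∀ x > (0:ℝ), genRAI F f α x =
      α * β * lam / x ^ β *
        (Real.exp (-(lam * α) / x ^ β) / (1 - Real.exp (-(lam * α) / x ^ β)))) :
    ∀ x > (0:ℝ), F x = Real.exp (-lam / x ^ β) := by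
  set g : ℝ → ℝ := fun x => Real.log (1 - F x ^ α) -
      Real.log (1 - Real.exp (-(lam * α) / x ^ β)) with hg_def
  -- basic positivity facts
  have hE : ∀ x : ℝ, 0 < x → Real.exp (-(lam * α) / x ^ β) < 1 := by
    intro x hx
    rw [Real.exp_lt_one_iff]
    have hxb : (0:ℝ) < x ^ β := Real.rpow_pos_of_pos hx β
    exact div_neg_of_neg_of_pos (by nlinarith) hxb
  have hP : ∀ x : ℝ, 0 < x → F x ^ α < 1 := fun x hx =>
    Real.rpow_lt_one (hF x hx).1.le (hF x hx).2 hα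
  -- derivative of g is zero on Ioi 0
  have hg : ∀ x ∈ Set.Ioi (0:ℝ), HasDerivAt g 0 x := by
    intro x hx
    have hx0 : (0:ℝ) < x := hx
    have hxb : (0:ℝ) < x ^ β := Real.rpow_pos_of_pos hx0 β
    have hFx := hF x hx
    have h1P : 0 < 1 - F x ^ α := by linarith [hP x hx0]
    have h1E : 0 < 1 - Real.exp (-(lam * α) / x ^ β) := by linarith [hE x hx0]
    -- derivative of first term
    have d1 : HasDerivAt (fun y => Real.log (1 - F y ^ α))
        ((0 - f x * α * F x ^ (α - 1)) / (1 - F x ^ α)) x := by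
      exact (((hasDerivAt_const x (1:ℝ)).sub
        ((hd x hx).rpow_const (Or.inl hFx.1.ne'))).log h1P.ne')
    -- derivative of inner exponent
    have dinner : HasDerivAt (fun y : ℝ => -(lam * α) / y ^ β)
        ((0 * x ^ β - -(lam * α) * (β * x ^ (β - 1))) / (x ^ β) ^ 2) x := by
      exact (hasDerivAt_const x (-(lam * α))).div
        (Real.hasDerivAt_rpow_const (Or.inl hx0.ne')) hxb.ne'
    have d2 : HasDerivAt (fun y => Real.log (1 - Real.exp (-(lam * α) / y ^ β)))
        ((0 - Real.exp (-(lam * α) / x ^ β) *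
            ((0 * x ^ β - -(lam * α) * (β * x ^ (β - 1))) / (x ^ β) ^ 2)) /
          (1 - Real.exp (-(lam * α) / x ^ β))) x := by
      exact (((hasDerivAt_const x (1:ℝ)).sub dinner.exp).log h1E.ne')
    have key := hL x hx0
    rw [genRAI, if_neg hα.ne'] at key
    have hsum := d1.sub d2
    refine (hsum.congr_deriv ?_ : HasDerivAt g 0 x)
    symm
    -- algebra: show 0 = d1 - d2
    have hb1 : x ^ (β - 1) = x ^ β / x := by
      rw [Real.rpow_sub hx0, Real.rpow_one]
    have ha1 : F x ^ (α - 1) = F x ^ α / F x := by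
      rw [Real.rpow_sub hFx.1, Real.rpow_one]
    rw [ha1] at key
    rw [hb1, ha1]
    have hne1 : F x ≠ 0 := hFx.1.ne'
    have hne2 : (1 - F x ^ α) ≠ 0 := h1P.ne'
    have hne3 : (1 - Real.exp (-(lam * α) / x ^ β)) ≠ 0 := h1E.ne'
    have hne4 : x ≠ 0 := hx0.ne'
    have hne5 : x ^ β ≠ 0 := hxb.ne'
    field_simp at key ⊢
    linear_combination α * key
  -- g is constant on Ioi 0
  have hconst : ∀ x ∈ Set.Ioi (0:ℝ), g x = g 1 := by
    intro x hx
    have hconv : Convex ℝ (Set.Ioi (0:ℝ)) := convex_Ioi 0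
    have hdiff : DifferentiableOn ℝ g (Set.Ioi 0) := fun y hy =>
      ((hg y hy).differentiableAt).differentiableWithinAt
    refine hconv.is_const_of_fderivWithin_eq_zero hdiff ?_ hx (by norm_num)
    intro y hy
    have := ((hg y hy).hasFDerivAt).fderiv
    rw [fderivWithin_of_isOpen isOpen_Ioi hy, this]
    ext
    simp
  -- limit of g at 0+ is 0
  have hlim : Filter.Tendsto g (nhdsWithin 0 (Set.Ioi 0)) (nhds 0) := by
    have t1 : Filter.Tendsto (fun x => Real.log (1 - F x ^ α))
        (nhdsWithin 0 (Set.Ioi 0)) (nhds 0) := by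
      have tF : Filter.Tendsto (fun x => F x ^ α) (nhdsWithin 0 (Set.Ioi 0)) (nhds 0) := by
        have hc : ContinuousAt (fun y : ℝ => y ^ α) 0 :=
          Real.continuousAt_rpow_const 0 α (Or.inr hα.le)
        have := hc.tendsto.comp hF0
        simpa [Real.zero_rpow hα.ne', Function.comp_def] using this
      have hc2 : ContinuousAt (fun y : ℝ => Real.log (1 - y)) 0 := by
        have : ContinuousAt Real.log (1 - 0) := Real.continuousAt_log (by norm_num)
        exact this.comp (continuousAt_const.sub continuousAt_id)
      have := hc2.tendsto.comp tF
      simpa [Function.comp_def] using this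
    have t2 : Filter.Tendsto (fun x => Real.log (1 - Real.exp (-(lam * α) / x ^ β)))
        (nhdsWithin 0 (Set.Ioi 0)) (nhds 0) := by
      have trp : Filter.Tendsto (fun x : ℝ => x ^ β) (nhdsWithin 0 (Set.Ioi 0))
          (nhdsWithin 0 (Set.Ioi 0)) := by
        apply tendsto_nhdsWithin_of_tendsto_nhds_of_eventually_within
        · have hc : ContinuousAt (fun y : ℝ => y ^ β) 0 :=
            Real.continuousAt_rpow_const 0 β (Or.inr hβ.le)
          simpa [Real.zero_rpow hβ.ne'] using
            (hc.tendsto.mono_left (nhdsWithin_le_nhds : nhdsWithin (0:ℝ) (Set.Ioi 0) ≤ nhds 0))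
        · filter_upwards [self_mem_nhdsWithin] with x hx
          exact Real.rpow_pos_of_pos hx β
      have tinv : Filter.Tendsto (fun x : ℝ => (x ^ β)⁻¹) (nhdsWithin 0 (Set.Ioi 0))
          Filter.atTop := tendsto_inv_nhdsGT_zero.comp trp
      have texp : Filter.Tendsto (fun x : ℝ => -(lam * α) / x ^ β)
          (nhdsWithin 0 (Set.Ioi 0)) Filter.atBot := by
        have : Filter.Tendsto (fun x : ℝ => -(lam * α) * (x ^ β)⁻¹)
            (nhdsWithin 0 (Set.Ioi 0)) Filter.atBot :=
          (Filter.tendsto_const_mul_atBot_of_neg (by nlinarith)).2 tinv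
        simpa [div_eq_mul_inv] using this
      have tE : Filter.Tendsto (fun x : ℝ => Real.exp (-(lam * α) / x ^ β))
          (nhdsWithin 0 (Set.Ioi 0)) (nhds 0) := Real.tendsto_exp_atBot.comp texp
      have hc2 : ContinuousAt (fun y : ℝ => Real.log (1 - y)) 0 := by
        have : ContinuousAt Real.log (1 - 0) := Real.continuousAt_log (by norm_num)
        exact this.comp (continuousAt_const.sub continuousAt_id)
      have := hc2.tendsto.comp tE
      simpa [Function.comp_def] using this
    simpa using t1.sub t2
  -- hence g ≡ 0 on Ioi 0
  have hg1 : g 1 = 0 := by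
    have heq : g =ᶠ[nhdsWithin 0 (Set.Ioi 0)] fun _ => g 1 := by
      filter_upwards [self_mem_nhdsWithin] with x hx
      exact hconst x hx
    have : Filter.Tendsto g (nhdsWithin 0 (Set.Ioi 0)) (nhds (g 1)) := by
      rw [Filter.tendsto_congr' heq]; exact tendsto_const_nhds
    exact (tendsto_nhds_unique this hlim)
  -- conclude
  intro x hx
  have hgx : g x = 0 := (hconst x hx).trans hg1
  have hFx := hF x hx
  have h1P : 0 < 1 - F x ^ α := by linarith [hP x hx]
  have h1E : 0 < 1 - Real.exp (-(lam * α) / x ^ β) := by linarith [hE x hx]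
  have hlog : Real.log (1 - F x ^ α) = Real.log (1 - Real.exp (-(lam * α) / x ^ β)) := by
    have := hgx
    simp only [hg_def, sub_eq_zero] at this
    exact this
  have hPE : F x ^ α = Real.exp (-(lam * α) / x ^ β) := by
    have := congrArg Real.exp hlog
    rw [Real.exp_log h1P, Real.exp_log h1E] at this
    linarith
  have : (F x ^ α) ^ α⁻¹ = (Real.exp (-(lam * α) / x ^ β)) ^ α⁻¹ := by rw [hPE]
  rw [Real.rpow_rpow_inv hFx.1.le hα.ne', ← Real.exp_mul] at this
  rw [this]
  congr 1
  field_simp
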